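/- Let W be the Weyl group of a root system R with basis Π, P ⊆ Π, and W^P the set of minimal length representatives of W/W_P. For λ ∈ a, if ⟨x, w(λ)⟩ ≤ 0 for all x in the dominant cone a^{*+} and all w ∈ W^P, then λ lies in the cone a_P^- = {Σ_{α∈P} λ_α α^∨ : λ_α ≤ 0}; conversely every element of a_P^- satisfies this condition. -/

import Mathlib

/-!
STATEMENT 3: For λ ∈ a: ⟨x, w(λ)⟩ ≤ 0 for all x in the dominant cone a^{*+} and all
w ∈ W^P = {w ∈ W : w(P) ⊂ R⁺}, if and only if λ lies in the cone
a_P^- = {Σ_{α∈P} λ_α α^∨ : λ_α ≤ 0}.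
-/

open scoped RealInnerProductSpace

noncomputable section

variable {E : Type*} [NormedAddCommGroup E] [InnerProductSpace ℝ E] [FiniteDimensional ℝ E]

/-- The coroot `α^∨ = 2α/⟨α,α⟩`. -/
def coroot (α : E) : E := (2 / ⟪α, α⟫) • α

/-- The positive roots: roots which are nonnegative combinations of Π. -/
def posRoots (R Pi : Finset E) : Set E :=
  {β | β ∈ R ∧ ∃ c : E → ℝ, (∀ α, 0 ≤ c α) ∧ β = ∑ α ∈ Pi, c α • α}

theorem stmt3
    (R Pi : Finset E) (hPiR : ↑Pi ⊆ (R : Set E)) (h0 : (0 : E) ∉ R)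
    (hred : ∀ β ∈ R, ∀ t : ℝ, t • β ∈ R → t = 1 ∨ t = -1)
    (hcrys : ∀ α ∈ R, ∀ β ∈ R, ∃ n : ℤ, ⟪β, coroot α⟫ = (n : ℝ))
    (hbasis : ∀ β ∈ R, (∃ c : E → ℝ, (∀ α, 0 ≤ c α) ∧ β = ∑ α ∈ Pi, c α • α) ∨
                       (∃ c : E → ℝ, (∀ α, c α ≤ 0) ∧ β = ∑ α ∈ Pi, c α • α))
    (hindep : LinearIndependent ℝ (fun x : {x // x ∈ Pi} => (x : E)))
    (s : E → (E ≃ₗ[ℝ] E))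
    (hs : ∀ α ∈ Pi, ∀ x : E, s α x = x - ⟪x, coroot α⟫ • α)
    (hsR : ∀ α ∈ Pi, ∀ β ∈ R, s α β ∈ R)
    (P : Finset E) (hP : P ⊆ Pi) (lam : E) :
    (∀ x : E, (∀ α ∈ Pi, 0 ≤ ⟪x, coroot α⟫) →
      ∀ w : E ≃ₗ[ℝ] E, w ∈ Subgroup.closure (s '' ↑Pi) →
        (∀ α ∈ P, w α ∈ posRoots R Pi) → ⟪x, w lam⟫ ≤ 0)
    ↔ ∃ c : E → ℝ, (∀ α ∈ P, c α ≤ 0) ∧ lam = ∑ α ∈ P, c α • coroot α := by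
  classical
  set G := Subgroup.closure (s '' (↑Pi : Set E))
  -- basic facts
  have hRnorm : ∀ β ∈ R, (0:ℝ) < ⟪β, β⟫ := by
    intro β hβ
    rcases lt_or_eq_of_le (real_inner_self_nonneg (x := β)) with h | h
    · exact h
    · exact absurd (inner_self_eq_zero.1 h.symm ▸ hβ) h0
  have hco : ∀ x γ : E, ⟪x, coroot γ⟫ = 2 / ⟪γ, γ⟫ * ⟪x, γ⟫ := by
    intro x γ; rw [coroot, real_inner_smul_right]
  have hipco : ∀ γ ∈ R, ∀ x : E, ⟪x, γ⟫ = ⟪γ, γ⟫ / 2 * ⟪x, coroot γ⟫ := by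
    intro γ hγ x
    rw [hco]
    have := (hRnorm γ hγ).ne'
    field_simp
  have hcoself : ∀ γ ∈ R, ⟪γ, coroot γ⟫ = 2 := by
    intro γ hγ
    rw [hco]
    have := (hRnorm γ hγ).ne'
    field_simp
  -- uniqueness of coefficients
  have huniq : ∀ c : E → ℝ, ∑ γ ∈ Pi, c γ • γ = 0 → ∀ γ ∈ Pi, c γ = 0 := by
    intro c hc γ hγ
    have h := linearIndependent_iff'.1 hindep Finset.univ (fun i => c ↑i) ?_ ⟨γ, hγ⟩ (Finset.mem_univ _)
    · exact h
    · rw [← hc]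
      exact (Finset.sum_coe_sort Pi (fun γ => c γ • γ))
  have huniq2 : ∀ c₁ c₂ : E → ℝ, ∑ γ ∈ Pi, c₁ γ • γ = ∑ γ ∈ Pi, c₂ γ • γ →
      ∀ γ ∈ Pi, c₁ γ = c₂ γ := by
    intro c₁ c₂ h γ hγ
    have h0' : ∑ γ ∈ Pi, (c₁ γ - c₂ γ) • γ = 0 := by
      simp only [sub_smul, Finset.sum_sub_distrib, h, sub_self]
    have := huniq _ h0' γ hγ
    linarith
  -- simple roots are positive
  have hsimple : ∀ β ∈ Pi, β ∈ posRoots R Pi := by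
    intro β hβ
    refine ⟨hPiR hβ, fun γ => if γ = β then 1 else 0, fun γ => by positivity, ?_⟩
    rw [Finset.sum_eq_single_of_mem β hβ]
    · simp
    · intro b hb hbβ; simp [hbβ]
  -- dominant x pairs nonneg with positive roots
  have hposx : ∀ x : E, (∀ α ∈ Pi, 0 ≤ ⟪x, coroot α⟫) → ∀ β ∈ posRoots R Pi, 0 ≤ ⟪x, β⟫ := by
    rintro x hx β ⟨hβR, c, hc, rfl⟩
    rw [inner_sum]
    apply Finset.sum_nonneg
    intro γ hγ
    rw [real_inner_smul_right, hipco γ (hPiR hγ)]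
    have h1 := hRnorm γ (hPiR hγ)
    have h2 := hx γ hγ
    have h3 := hc γ
    positivity
  -- elements of G preserve inner products and roots
  have hG : ∀ w : E ≃ₗ[ℝ] E, w ∈ G → (∀ x y : E, ⟪w x, w y⟫ = ⟪x, y⟫) ∧ (∀ β ∈ R, w β ∈ R) := by
    intro w hw
    refine Subgroup.closure_induction
      (p := fun g _ => (∀ x y : E, ⟪g x, g y⟫ = ⟪x, y⟫) ∧ (∀ β ∈ R, g β ∈ R)) ?_ ?_ ?_ ?_ hw
    · rintro g ⟨α, hα, rfl⟩
      have hαα := (hRnorm α (hPiR hα)).ne'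
      constructor
      · intro x y
        rw [hs α hα x, hs α hα y]
        simp only [inner_sub_left, inner_sub_right, real_inner_smul_left, real_inner_smul_right, hco]
        rw [real_inner_comm α x, real_inner_comm α y]
        field_simp
        ring
      · intro β hβ; exact hsR α hα β hβ
    · exact ⟨fun x y => rfl, fun β hβ => hβ⟩
    · rintro a b _ _ ⟨ha1, ha2⟩ ⟨hb1, hb2⟩
      exact ⟨fun x y => by rw [show (a*b) x = a (b x) from rfl, show (a*b) y = a (b y) from rfl,
        ha1, hb1], fun β hβ => ha2 _ (hb2 β hβ)⟩
    · rintro a _ ⟨h1, h2⟩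
      constructor
      · intro x y
        have := h1 (a⁻¹ x) (a⁻¹ y)
        rw [show a (a⁻¹ x) = x from a.apply_symm_apply x,
          show a (a⁻¹ y) = y from a.apply_symm_apply y] at this
        exact this.symm
      · intro β hβ
        have himg : R.image (fun b => a b) = R := by
          apply Finset.eq_of_subset_of_card_le
          · intro b hb
            obtain ⟨d, hd, rfl⟩ := Finset.mem_image.1 hb
            exact h2 d hd
          · rw [Finset.card_image_of_injective _ a.injective]
        rw [← himg] at hβ
        obtain ⟨d, hd, hdb⟩ := Finset.mem_image.1 hβ
        have : a⁻¹ β = d := by rw [← hdb]; exact a.symm_apply_apply d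
        rwa [this]
  -- fundamental coweights
  have homex : ∀ γ : E, ∃ om : E, γ ∈ Pi →
      om ∈ Submodule.span ℝ (↑Pi : Set E) ∧
        (∀ δ ∈ Pi, ⟪om, coroot δ⟫ = if δ = γ then 1 else 0) := by
    intro γ
    by_cases hγ : γ ∈ Pi
    · set U := Submodule.span ℝ (↑(Pi.erase γ) : Set E) with hU
      set v := γ - (U.orthogonalProjectionOnto γ : E) with hv
      have hvU : v ∈ Uᗮ := Submodule.sub_starProjection_mem_orthogonal γ
      have hvspan : v ∈ Submodule.span ℝ (↑Pi : Set E) := by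
        apply Submodule.sub_mem
        · exact Submodule.subset_span hγ
        · refine Submodule.span_mono ?_ (U.orthogonalProjectionOnto γ).2
          intro x hx
          exact Finset.mem_coe.2 (Finset.mem_of_mem_erase (Finset.mem_coe.1 hx))
      have hγnU : γ ∉ U := by
        intro hγU
        have hni := hindep.notMem_span_image
          (s := {i : {x // x ∈ Pi} | (i : E) ≠ γ}) (x := (⟨γ, hγ⟩ : {x // x ∈ Pi})) (by simp)
        apply hni
        have himg : ((fun x : {x // x ∈ Pi} => (x : E)) '' {i | (i : E) ≠ γ})
            = (↑(Pi.erase γ) : Set E) := by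
          ext z
          constructor
          · rintro ⟨i, hi, rfl⟩; exact Finset.mem_coe.2 (Finset.mem_erase.2 ⟨hi, i.2⟩)
          · intro hz
            have hz' := Finset.mem_erase.1 (Finset.mem_coe.1 hz)
            exact ⟨⟨z, hz'.2⟩, hz'.1, rfl⟩
        rw [himg]
        exact hγU
      have hvne : v ≠ 0 := by
        intro h
        apply hγnU
        have : γ = (U.orthogonalProjectionOnto γ : E) := by
          have := sub_eq_zero.1 h; exact this
        rw [this]; exact (U.orthogonalProjectionOnto γ).2
      have hvv : (0:ℝ) < ⟪v, v⟫ := by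
        rcases lt_or_eq_of_le (real_inner_self_nonneg (x := v)) with h | h
        · exact h
        · exact absurd (inner_self_eq_zero.1 h.symm) hvne
      have hvγ : ⟪v, γ⟫ = ⟪v, v⟫ := by
        have hp : ⟪v, (U.orthogonalProjectionOnto γ : E)⟫ = 0 := by
          rw [real_inner_comm]
          exact Submodule.inner_right_of_mem_orthogonal (U.orthogonalProjectionOnto γ).2 hvU
        have : γ = v + (U.orthogonalProjectionOnto γ : E) := by rw [hv]; abel
        rw [this, inner_add_right, hp, add_zero]
      have hvPi : ∀ δ ∈ Pi, δ ≠ γ → ⟪v, δ⟫ = 0 := by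
        intro δ hδ hδγ
        rw [real_inner_comm]
        exact Submodule.inner_right_of_mem_orthogonal
          (Submodule.subset_span (Finset.mem_coe.2 (Finset.mem_erase.2 ⟨hδγ, hδ⟩))) hvU
      refine ⟨(⟪γ, γ⟫ / (2 * ⟪v, v⟫)) • v, fun _ => ⟨Submodule.smul_mem _ _ hvspan, ?_⟩⟩
      intro δ hδ
      have hγγ := (hRnorm γ (hPiR hγ)).ne'
      by_cases hδγ : δ = γ
      · subst hδγ
        rw [if_pos rfl, hco, real_inner_smul_left, hvγ]
        field_simp
      · rw [if_neg hδγ, hco, real_inner_smul_left, hvPi δ hδ hδγ]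
        ring
    · exact ⟨0, fun h => absurd h hγ⟩
  choose om homspec using homex
  -- rho: strictly dominant regular vector
  set rho := ∑ γ ∈ Pi, om γ with hrho
  have hrhoco : ∀ δ ∈ Pi, ⟪rho, coroot δ⟫ = 1 := by
    intro δ hδ
    rw [hrho, sum_inner, Finset.sum_eq_single_of_mem δ hδ]
    · rw [(homspec δ hδ).2 δ hδ, if_pos rfl]
    · intro b hb hbδ
      rw [(homspec b hb).2 δ hδ, if_neg (fun h => hbδ (by rw [h]))]
  have hrhopos : ∀ γ ∈ Pi, (0:ℝ) < ⟪rho, γ⟫ := by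
    intro γ hγ
    rw [hipco γ (hPiR hγ), hrhoco γ hγ, mul_one]
    have := hRnorm γ (hPiR hγ)
    linarith
  have hrhoNeg : ∀ β ∈ R, β ∉ posRoots R Pi → ⟪rho, β⟫ < 0 := by
    intro β hβ hnp
    rcases hbasis β hβ with ⟨c, hc, hcomb⟩ | ⟨c, hc, hcomb⟩
    · exact absurd ⟨hβ, c, hc, hcomb⟩ hnp
    · have hterms : ∀ γ ∈ Pi, ⟪rho, c γ • γ⟫ ≤ 0 := by
        intro γ hγ
        rw [real_inner_smul_right]
        exact mul_nonpos_of_nonpos_of_nonneg (hc γ) (hrhopos γ hγ).le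
      have hle : ⟪rho, β⟫ ≤ 0 := by
        rw [hcomb, inner_sum]
        exact Finset.sum_nonpos hterms
      rcases lt_or_eq_of_le hle with h | h
      · exact h
      · exfalso
        have hz : ∀ γ ∈ Pi, ⟪rho, c γ • γ⟫ = 0 := by
          apply (Finset.sum_eq_zero_iff_of_nonpos hterms).1
          rw [← inner_sum, ← hcomb, h]
      -- each c γ = 0, so β = 0, contradiction
        have hc0 : ∀ γ ∈ Pi, c γ = 0 := by
          intro γ hγ
          have := hz γ hγ
          rw [real_inner_smul_right] at this
          rcases mul_eq_zero.1 this with h' | h'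
          · exact h'
          · exact absurd h' (hrhopos γ hγ).ne'
        apply h0
        have : β = 0 := by
          rw [hcomb]
          apply Finset.sum_eq_zero
          intro γ hγ
          rw [hc0 γ hγ, zero_smul]
        rwa [this] at hβ
  constructor
  · intro H
    have hid : ∀ α ∈ P, (1 : E ≃ₗ[ℝ] E) α ∈ posRoots R Pi := fun α hα => by
      simpa using hsimple α (hP hα)
    set K := Submodule.span ℝ (↑Pi : Set E) with hK
    have hcoK : ∀ α ∈ Pi, coroot α ∈ K := fun α hα =>
      Submodule.smul_mem _ _ (Submodule.subset_span hα)
    have hmemK : lam ∈ K := by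
      set x := lam - (K.orthogonalProjectionOnto lam : E) with hxdef
      have hxK : x ∈ Kᗮ := Submodule.sub_starProjection_mem_orthogonal lam
      have hdomx : ∀ t : ℝ, ∀ α ∈ Pi, (0:ℝ) ≤ ⟪t • x, coroot α⟫ := by
        intro t α hα
        rw [real_inner_smul_left, real_inner_comm,
          Submodule.inner_right_of_mem_orthogonal (hcoK α hα) hxK, mul_zero]
      have h1 := H x (by intro α hα; simpa using hdomx 1 α hα) 1 (one_mem _) hid
      have h2 := H (-x) (by intro α hα; simpa using hdomx (-1) α hα) 1 (one_mem _) hid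
      rw [show ((1 : E ≃ₗ[ℝ] E) lam) = lam from rfl] at h1 h2
      rw [inner_neg_left] at h2
      have hx0 : ⟪x, lam⟫ = 0 := le_antisymm h1 (by linarith)
      have hp : ⟪x, (K.orthogonalProjectionOnto lam : E)⟫ = 0 := by
        rw [real_inner_comm]
        exact Submodule.inner_right_of_mem_orthogonal (K.orthogonalProjectionOnto lam).2 hxK
      have hsplit : lam = (K.orthogonalProjectionOnto lam : E) + x := by rw [hxdef]; abel
      have hxx : ⟪x, x⟫ = 0 := by
        have := hx0
        rw [hsplit, inner_add_right, hp, zero_add] at this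
        exact this
      have hxz : x = 0 := inner_self_eq_zero.1 hxx
      rw [hsplit, hxz, add_zero]
      exact (K.orthogonalProjectionOnto lam).2
    obtain ⟨d, -, hd⟩ := Submodule.mem_span_finset.1 hmemK
    set c : E → ℝ := fun γ => d γ * ⟪γ, γ⟫ / 2 with hcdef
    have hlam : lam = ∑ γ ∈ Pi, c γ • coroot γ := by
      rw [← hd]
      apply Finset.sum_congr rfl
      intro γ hγ
      have hγγ := (hRnorm γ (hPiR hγ)).ne'
      rw [coroot, smul_smul, hcdef]
      congr 1
      field_simp
    have hcval : ∀ γ ∈ Pi, ⟪om γ, lam⟫ = c γ := by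
      intro γ hγ
      rw [hlam, inner_sum, Finset.sum_eq_single_of_mem γ hγ]
      · rw [real_inner_smul_right, (homspec γ hγ).2 γ hγ, if_pos rfl, mul_one]
      · intro b hb hbγ
        rw [real_inner_smul_right, (homspec γ hγ).2 b hb, if_neg hbγ, mul_zero]
    have homdom : ∀ γ ∈ Pi, ∀ δ ∈ Pi, (0:ℝ) ≤ ⟪om γ, coroot δ⟫ := by
      intro γ hγ δ hδ
      rw [(homspec γ hγ).2 δ hδ]
      positivity
    have hcnonpos : ∀ γ ∈ Pi, c γ ≤ 0 := by
      intro γ hγ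
      have h := H (om γ) (homdom γ hγ) 1 (one_mem _) hid
      rw [show ((1 : E ≃ₗ[ℝ] E) lam) = lam from rfl, hcval γ hγ] at h
      exact h
    have hczero : ∀ α ∈ Pi, α ∉ P → c α = 0 := by
      intro α hα hαP
      set μ := -(om α) with hμdef
      set PosP : Finset E := R.filter
        (fun β => β ∈ posRoots R Pi ∧ β ∈ Submodule.span ℝ (↑P : Set E)) with hPosPdef
      set σ := ∑ β ∈ PosP, β with hσdef
      have hμK : μ ∈ K := Submodule.neg_mem _ (homspec α hα).1
      have hPK : (↑P : Set E) ⊆ (↑Pi : Set E) := by exact_mod_cast Finset.coe_subset.2 hP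
      have hσK : σ ∈ K := by
        apply Submodule.sum_mem
        intro β hβ
        obtain ⟨hβR, hβpos, hβspan⟩ := Finset.mem_filter.1 hβ
        exact Submodule.span_mono hPK hβspan
      have hμfix : ∀ β ∈ P, s β μ = μ := by
        intro β hβ
        have hβPi := hP hβ
        rw [hs β hβPi μ]
        have hz : ⟪μ, coroot β⟫ = 0 := by
          rw [hμdef, inner_neg_left, (homspec α hα).2 β hβPi,
            if_neg (show ¬ β = α from fun h => hαP (h ▸ hβ)), neg_zero]
        rw [hz, zero_smul, sub_zero]
      -- reflection s β shifts σ by -2β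
      have hswap : ∀ β ∈ P, s β σ = σ - β - β := by
        intro β hβ
        have hβPi := hP hβ
        have hβR := hPiR hβPi
        have hβPosP : β ∈ PosP := Finset.mem_filter.2 ⟨hβR, hsimple β hβPi,
          Submodule.subset_span (Finset.mem_coe.2 hβ)⟩
        have hmapsto : ∀ γ ∈ PosP.erase β, s β γ ∈ PosP.erase β := by
          intro γ hγe
          obtain ⟨hγβ, hγPosP⟩ := Finset.mem_erase.1 hγe
          obtain ⟨hγR, hγpos, hγspan⟩ := Finset.mem_filter.1 hγPosP
          obtain ⟨-, c₀, hc₀, hγcomb⟩ := hγpos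
          -- express s β γ with coefficients
          set k := ⟪γ, coroot β⟫ with hkdef
          have hsβγ : s β γ = γ - k • β := hs β hβPi γ
          have hc₁ : s β γ = ∑ δ ∈ Pi, (c₀ δ - (if δ = β then k else 0)) • δ := by
            rw [hsβγ]
            simp only [sub_smul, Finset.sum_sub_distrib, ite_smul, zero_smul]
            rw [Finset.sum_ite_eq' Pi β (fun δ => k • δ), if_pos hβPi, ← hγcomb]
          by_cases hex : ∃ δ ∈ Pi, δ ≠ β ∧ 0 < c₀ δ
          · obtain ⟨δ₀, hδ₀, hδ₀β, hδ₀pos⟩ := hex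
            have hsβγR : s β γ ∈ R := hsR β hβPi γ hγR
            refine Finset.mem_erase.2 ⟨?_, Finset.mem_filter.2 ⟨hsβγR, ⟨hsβγR, ?_⟩, ?_⟩⟩
            · -- s β γ ≠ β
              intro hEq
              have hβcomb : s β γ = ∑ δ ∈ Pi, (fun δ => if δ = β then (1:ℝ) else 0) δ • δ := by
                rw [hEq, Finset.sum_eq_single_of_mem β hβPi]
                · simp
                · intro b hb hbβ; simp [hbβ]
              have := huniq2 _ _ (hc₁.symm.trans hβcomb) δ₀ hδ₀
              rw [if_neg hδ₀β] at this
              simp only [if_neg hδ₀β, sub_zero] at this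
              rw [this] at hδ₀pos
              norm_num at hδ₀pos
            · -- positivity of s β γ
              rcases hbasis (s β γ) hsβγR with ⟨e₂, he₂, hcomb₂⟩ | ⟨e₂, he₂, hcomb₂⟩
              · exact ⟨e₂, he₂, hcomb₂⟩
              · exfalso
                have := huniq2 _ _ (hc₁.symm.trans hcomb₂) δ₀ hδ₀
                rw [if_neg hδ₀β, sub_zero] at this
                have := he₂ δ₀
                linarith
            · -- span P
              rw [hsβγ]
              exact Submodule.sub_mem _ hγspan
                (Submodule.smul_mem _ _ (Submodule.subset_span (Finset.mem_coe.2 hβ)))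
          · -- all coefficients other than β vanish: γ = c₀ β • β, contradiction
            exfalso
            push_neg at hex
            have hγβ' : γ = c₀ β • β := by
              rw [hγcomb, Finset.sum_eq_single_of_mem β hβPi]
              intro b hb hbβ
              have h1 := hex b hb hbβ
              have h2 := hc₀ b
              have : c₀ b = 0 := le_antisymm h1 h2
              rw [this, zero_smul]
            rcases hred β hβR (c₀ β) (by rw [← hγβ']; exact hγR) with h1 | h1
            · apply hγβ; rw [hγβ', h1, one_smul]
            · have := hc₀ β; rw [h1] at this; norm_num at this
        have himg : (PosP.erase β).image (fun γ => s β γ) = PosP.erase β := by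
          apply Finset.eq_of_subset_of_card_le
          · intro z hz
            obtain ⟨γ, hγ, rfl⟩ := Finset.mem_image.1 hz
            exact hmapsto γ hγ
          · rw [Finset.card_image_of_injective _ (s β).injective]
        have hsum2 : ∑ γ ∈ PosP.erase β, s β γ = ∑ γ ∈ PosP.erase β, γ := by
          conv_rhs => rw [← himg]
          rw [Finset.sum_image (fun a _ b _ h => (s β).injective h)]
        have hsββ : s β β = -β := by
          rw [hs β hβPi β, hcoself β hβR, two_smul]
          abel
        have hmap : s β σ = ∑ γ ∈ PosP, s β γ := map_sum (s β) _ _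
        rw [hmap, ← Finset.add_sum_erase _ (fun γ => s β γ) hβPosP, hsum2, hsββ]
        have hσe : ∑ γ ∈ PosP.erase β, γ = σ - β := by
          rw [hσdef, ← Finset.add_sum_erase _ (fun γ => γ) hβPosP]
          abel
        rw [hσe]
        abel
      -- finiteness of orbits
      have horbfin : ∀ z ∈ K, Set.Finite {y : E | ∃ w ∈ G, w z = y} := by
        intro z hz
        obtain ⟨m, -, hm⟩ := Submodule.mem_span_finset.1 hz
        apply Set.Finite.subset (Set.finite_range
          (fun f : {x // x ∈ Pi} → {x // x ∈ R} => ∑ γ ∈ Pi.attach, m ↑γ • (↑(f γ) : E)))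
        rintro y ⟨w, hw, rfl⟩
        refine ⟨fun γ => ⟨w ↑γ, (hG w hw).2 ↑γ (hPiR γ.2)⟩, ?_⟩
        rw [← hm, map_sum]
        simp only [map_smul]
        exact Finset.sum_attach Pi (fun γ => m γ • w γ)
      -- first maximization
      set A : Set E := {y : E | ∃ w ∈ G, w μ = y} with hAdef
      have hAfin : A.Finite := horbfin μ hμK
      have hAne : A.Nonempty := ⟨μ, 1, one_mem _, rfl⟩
      obtain ⟨t, ht, htmax'⟩ :=
        Set.Finite.exists_maximalFor (fun y => (⟪rho, y⟫ : ℝ)) A hAfin hAne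
      obtain ⟨w₁, hw₁, hw₁t⟩ := ht
      have htmax : ∀ y ∈ A, ⟪rho, y⟫ ≤ ⟪rho, t⟫ := by
        intro y hy
        rcases le_total (⟪rho, y⟫ : ℝ) ⟪rho, t⟫ with h | h
        · exact h
        · exact htmax' hy h
      -- second maximization
      set B : Set E := {z : E | ∃ w ∈ G, w μ = t ∧ w σ = z} with hBdef
      have hBfin : B.Finite := (horbfin σ hσK).subset (by
        rintro z ⟨w, hw, -, rfl⟩; exact ⟨w, hw, rfl⟩)
      have hBne : B.Nonempty := ⟨w₁ σ, w₁, hw₁, hw₁t, rfl⟩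
      obtain ⟨u, hu, humax'⟩ :=
        Set.Finite.exists_maximalFor (fun z => (⟪rho, z⟫ : ℝ)) B hBfin hBne
      obtain ⟨w₀, hw₀, hw₀μ, hw₀σ⟩ := hu
      have humax : ∀ z ∈ B, ⟪rho, z⟫ ≤ ⟪rho, u⟫ := by
        intro z hz
        rcases le_total (⟪rho, z⟫ : ℝ) ⟪rho, u⟫ with h | h
        · exact h
        · exact humax' hz h
      -- t is dominant
      have hdomt : ∀ δ ∈ Pi, (0:ℝ) ≤ ⟪t, coroot δ⟫ := by
        intro δ hδ
        by_contra hneg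
        push_neg at hneg
        have hsδG : s δ ∈ G := Subgroup.subset_closure ⟨δ, hδ, rfl⟩
        have hmem : s δ t ∈ A :=
          ⟨s δ * w₀, mul_mem hsδG hw₀, by
            rw [show (s δ * w₀) μ = s δ (w₀ μ) from rfl, hw₀μ]⟩
        have hle := htmax _ hmem
        rw [hs δ hδ t, inner_sub_right, real_inner_smul_right] at hle
        nlinarith [hrhopos δ hδ]
      -- w₀ maps P to positive roots
      have hwP : ∀ β ∈ P, w₀ β ∈ posRoots R Pi := by
        intro β hβ
        by_contra hnp
        have hβPi := hP hβ
        have hw₀β : w₀ β ∈ R := (hG w₀ hw₀).2 β (hPiR hβPi)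
        have hlt : ⟪rho, w₀ β⟫ < 0 := hrhoNeg _ hw₀β hnp
        have hsβG : s β ∈ G := Subgroup.subset_closure ⟨β, hβPi, rfl⟩
        have hmemB : w₀ (s β σ) ∈ B := ⟨w₀ * s β, mul_mem hw₀ hsβG,
          by rw [show (w₀ * s β) μ = w₀ (s β μ) from rfl, hμfix β hβ, hw₀μ], rfl⟩
        have hle := humax _ hmemB
        rw [hswap β hβ, map_sub, map_sub, hw₀σ, inner_sub_right, inner_sub_right] at hle
        linarith
      -- conclude
      have hfin := H t hdomt w₀ hw₀ hwP
      have horth := (hG w₀ hw₀).1 μ lam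
      rw [← hw₀μ, horth, hμdef, inner_neg_left, hcval α hα] at hfin
      have := hcnonpos α hα
      linarith
    refine ⟨fun γ => if γ ∈ P then c γ else 0, fun β hβ => by
      simpa [hβ] using hcnonpos β (hP hβ), ?_⟩
    have hsum : ∑ γ ∈ P, (if γ ∈ P then c γ else 0) • coroot γ
        = ∑ γ ∈ Pi, c γ • coroot γ := by
      rw [Finset.sum_congr rfl (fun γ hγ => by rw [if_pos hγ])]
      exact Finset.sum_subset hP (fun γ hγ hγP => by rw [hczero γ hγ hγP, zero_smul])
    rw [hlam, ← hsum]
  · rintro ⟨c, hc, rfl⟩ x hx w hw hwP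
    rw [map_sum, inner_sum]
    apply Finset.sum_nonpos
    intro β hβ
    have hβR : β ∈ R := hPiR (hP hβ)
    have h1 : w (c β • coroot β) = (c β * (2 / ⟪β, β⟫)) • w β := by
      rw [coroot, map_smul, map_smul, smul_smul]
    rw [h1, real_inner_smul_right]
    have h2 : (0:ℝ) ≤ ⟪x, w β⟫ := hposx x hx (w β) (hwP β hβ)
    have h3 := hc β hβ
    have h4 := hRnorm β hβR
    have h5 : (0:ℝ) ≤ 2 / ⟪β, β⟫ := by positivity
    exact mul_nonpos_of_nonpos_of_nonneg (mul_nonpos_of_nonpos_of_nonneg h3 h5) h2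

end
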